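/- Let E : U₀ → ℝ be continuously differentiable on an open subset U₀ of a finite-dimensional real inner product space, with gradient g, and let (u_k) ⊂ U₀ satisfy u_{k+1} = u_k − s_k g(u_k) with Armijo stepsizes: s_k = h_k f^{j_k} where f ∈ (0,1), h_k is bounded away from 0 along any subsequence converging to a point with nonzero gradient, σ ∈ (0,1), and j_k is the smallest nonnegative integer ℓ such that E(u_k) − E(u_k − h_k f^ℓ g(u_k)) ≥ σ h_k f^ℓ ‖g(u_k)‖². If E(u_k) is bounded below, then every limit point u* ∈ U₀ of (u_k) satisfies g(u*) = 0. -/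

import Mathlib

open Filter

/-- Convergence of gradient descent with the Armijo rule and adaptive search
horizons: every limit point of the iterates lying in the domain is a stationary
point of the cost. -/
theorem armijo_gradient_descent_limit_points_stationary
    {U : Type*} [NormedAddCommGroup U] [InnerProductSpace ℝ U]
    [FiniteDimensional ℝ U]
    (U₀ : Set U) (hU₀ : IsOpen U₀)
    (E : U → ℝ) (g : U → U)
    (hE : ContDiffOn ℝ 1 E U₀)
    (hg : ∀ x ∈ U₀, HasGradientAt E (g x) x)
    (u : ℕ → U) (hu : ∀ k, u k ∈ U₀)
    (f σ : ℝ) (hf : f ∈ Set.Ioo (0:ℝ) 1) (hσ : σ ∈ Set.Ioo (0:ℝ) 1)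
    (h s : ℕ → ℝ) (hh : ∀ k, 0 < h k)
    -- the search horizons are bounded away from zero along any subsequence
    -- converging to a point of the domain with nonzero gradient
    (hhsub : ∀ φ : ℕ → ℕ, StrictMono φ → ∀ ustar ∈ U₀,
      Tendsto (fun p => u (φ p)) atTop (nhds ustar) → g ustar ≠ 0 →
        ∃ ε > 0, ∀ᶠ p in atTop, ε ≤ h (φ p))
    (j : ℕ → ℕ)
    -- `j k` is the smallest `ℓ ≥ 0` for which the Armijo inequality holds
    (hjmin : ∀ k, (E (u k) - E (u k - (h k * f ^ (j k)) • g (u k))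
          ≥ σ * (h k * f ^ (j k)) * ‖g (u k)‖^2) ∧
        ∀ ℓ < j k, ¬ (E (u k) - E (u k - (h k * f ^ ℓ) • g (u k))
          ≥ σ * (h k * f ^ ℓ) * ‖g (u k)‖^2))
    (hsk : ∀ k, s k = h k * f ^ (j k))
    (hrec : ∀ k, u (k+1) = u k - s k • g (u k))
    (hbdd : BddBelow (Set.range fun k => E (u k))) :
    ∀ ustar ∈ U₀,
      (∃ φ : ℕ → ℕ, StrictMono φ ∧ Tendsto (fun p => u (φ p)) atTop (nhds ustar)) →
      g ustar = 0 := by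
  rintro ustar hustar ⟨φ, hφ, hconv⟩
  by_contra hgne
  obtain ⟨hf0, hf1⟩ := hf
  obtain ⟨hσ0, hσ1⟩ := hσ
  -- positivity of stepsizes
  have hspos : ∀ k, 0 < s k := fun k => by
    rw [hsk]; exact mul_pos (hh k) (pow_pos hf0 _)
  -- continuity of the gradient on `U₀`
  have hgcont : ContinuousOn g U₀ := by
    have h1 : ContinuousOn (fderiv ℝ E) U₀ := hE.continuousOn_fderiv_of_isOpen hU₀ le_rfl
    have h2 : ContinuousOn (fun x => (InnerProductSpace.toDual ℝ U).symm (fderiv ℝ E x)) U₀ :=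
      (InnerProductSpace.toDual ℝ U).symm.continuous.comp_continuousOn h1
    refine h2.congr fun x hx => ?_
    dsimp only
    rw [(hasGradientAt_iff_hasFDerivAt.mp (hg x hx)).fderiv,
      LinearIsometryEquiv.symm_apply_apply]
  have hgC : ContinuousAt g ustar := hgcont.continuousAt (hU₀.mem_nhds hustar)
  -- sufficient decrease
  have hdec : ∀ k, σ * s k * ‖g (u k)‖ ^ 2 ≤ E (u k) - E (u (k + 1)) := fun k => by
    rw [hrec k, hsk k]; exact (hjmin k).1
  have hanti : Antitone fun k => E (u k) := by
    refine antitone_nat_of_succ_le fun k => ?_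
    have h1 := hdec k
    have h2 : 0 ≤ σ * s k * ‖g (u k)‖ ^ 2 :=
      mul_nonneg (mul_nonneg hσ0.le (hspos k).le) (sq_nonneg _)
    linarith
  have hL : Tendsto (fun k => E (u k)) atTop (nhds (⨅ k, E (u k))) :=
    tendsto_atTop_ciInf hanti hbdd
  have hdiff0 : Tendsto (fun k => E (u k) - E (u (k + 1))) atTop (nhds 0) := by
    have := hL.sub (hL.comp (tendsto_add_atTop_nat 1))
    simpa using this
  -- `s k * ‖g (u k)‖² → 0`
  have hs0 : Tendsto (fun k => s k * ‖g (u k)‖ ^ 2) atTop (nhds 0) := by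
    have hsq : Tendsto (fun k => σ * (s k * ‖g (u k)‖ ^ 2)) atTop (nhds 0) := by
      refine squeeze_zero (fun k => mul_nonneg hσ0.le
        (mul_nonneg (hspos k).le (sq_nonneg _))) (fun k => ?_) hdiff0
      have := hdec k; linarith [this]
    have := hsq.const_mul σ⁻¹
    simpa [mul_assoc, inv_mul_cancel_left₀ hσ0.ne'] using this
  -- limits along the subsequence
  have hgconv : Tendsto (fun p => g (u (φ p))) atTop (nhds (g ustar)) :=
    hgC.tendsto.comp hconv
  have hnconv : Tendsto (fun p => ‖g (u (φ p))‖ ^ 2) atTop (nhds (‖g ustar‖ ^ 2)) :=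
    (continuous_norm.continuousAt.tendsto.comp hgconv).pow 2
  have ha : (0:ℝ) < ‖g ustar‖ ^ 2 := pow_pos (norm_pos_iff.mpr hgne) 2
  have hsφ : Tendsto (fun p => s (φ p)) atTop (nhds 0) := by
    have h1 : Tendsto (fun p => s (φ p) * ‖g (u (φ p))‖ ^ 2) atTop (nhds 0) :=
      hs0.comp hφ.tendsto_atTop
    have h2 : Tendsto (fun p => s (φ p) * ‖g (u (φ p))‖ ^ 2 / ‖g (u (φ p))‖ ^ 2)
        atTop (nhds (0 / ‖g ustar‖ ^ 2)) := h1.div hnconv ha.ne'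
    rw [zero_div] at h2
    refine h2.congr' ?_
    filter_upwards [hnconv.eventually (eventually_gt_nhds
      (show ‖g ustar‖^2/2 < ‖g ustar‖^2 by linarith))] with p hp
    have : ‖g (u (φ p))‖ ^ 2 ≠ 0 := by nlinarith
    rw [mul_div_assoc, div_self this, mul_one]
  obtain ⟨ε, hε, hεev⟩ := hhsub φ hφ ustar hustar hconv hgne
  -- `f ^ j (φ p) → 0`, hence eventually `1 ≤ j (φ p)`
  have hfj0 : Tendsto (fun p => f ^ j (φ p)) atTop (nhds 0) := by
    have hdiv : Tendsto (fun p => s (φ p) / ε) atTop (nhds 0) := by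
      simpa using hsφ.div_const ε
    refine squeeze_zero' (Eventually.of_forall fun p => by positivity) ?_ hdiv
    filter_upwards [hεev] with p hp
    rw [le_div_iff₀ hε, hsk, mul_comm (h (φ p))]
    exact mul_le_mul_of_nonneg_left hp (le_of_lt (pow_pos hf0 _))
  have hjev : ∀ᶠ p in atTop, 1 ≤ j (φ p) := by
    filter_upwards [hfj0.eventually_lt_const one_pos] with p hp
    by_contra hc
    push_neg at hc
    interval_cases hj : j (φ p) <;> simp_all
  -- choose a ball around `ustar` on which inner products of gradients are large
  obtain ⟨r, hr, hball⟩ := Metric.isOpen_iff.mp hU₀ ustar hustar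
  set a : ℝ := ‖g ustar‖ ^ 2 with ha_def
  set m : ℝ := (σ * a + a) / 2 with hm_def
  have hm1 : σ * a < m := by rw [hm_def]; nlinarith
  have hm2 : m < a := by rw [hm_def]; nlinarith
  have hF : ContinuousAt (fun q : U × U => (inner ℝ (g q.1) (g q.2) : ℝ)) (ustar, ustar) :=
    (continuous_inner (𝕜 := ℝ)).continuousAt.comp ((hgC.comp continuousAt_fst).prodMk (hgC.comp continuousAt_snd))
  have hF2 : ContinuousAt (fun q : U × U => σ * ‖g q.2‖ ^ 2) (ustar, ustar) :=
    (continuousAt_const.mul (((continuous_norm.continuousAt.comp (hgC.comp continuousAt_snd))).pow 2))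
  have hgt : ∀ᶠ q : U × U in nhds (ustar, ustar),
      m < (inner ℝ (g q.1) (g q.2) : ℝ) ∧ σ * ‖g q.2‖ ^ 2 < m := by
    have h1 : ∀ᶠ q : U × U in nhds (ustar, ustar), m < (inner ℝ (g q.1) (g q.2) : ℝ) := by
      refine hF.eventually (eventually_gt_nhds ?_)
      show m < (inner ℝ (g ustar) (g ustar) : ℝ)
      rw [real_inner_self_eq_norm_sq]
      exact hm2
    have h2 : ∀ᶠ q : U × U in nhds (ustar, ustar), σ * ‖g q.2‖ ^ 2 < m :=
      hF2.eventually (eventually_lt_nhds hm1)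
    exact h1.and h2
  obtain ⟨ρ₀, hρ₀, hρball⟩ := Metric.eventually_nhds_iff.mp hgt
  set ρ : ℝ := min ρ₀ r with hρ_def
  have hρpos : 0 < ρ := lt_min hρ₀ hr
  have hkey : ∀ x y : U, dist x ustar < ρ → dist y ustar < ρ →
      m < (inner ℝ (g x) (g y) : ℝ) ∧ σ * ‖g y‖ ^ 2 < m := by
    intro x y hx hy
    exact hρball (show dist (x, y) (ustar, ustar) < ρ₀ by
      rw [Prod.dist_eq]
      exact max_lt (lt_of_lt_of_le hx (min_le_left _ _)) (lt_of_lt_of_le hy (min_le_left _ _)))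
  -- eventual smallness conditions; pick one good index
  have hE1 : ∀ᶠ p in atTop, dist (u (φ p)) ustar < ρ / 2 :=
    hconv.eventually (Metric.eventually_nhds_iff.mpr ⟨ρ / 2, half_pos hρpos, fun y hy => hy⟩)
  have hE2 : ∀ᶠ p in atTop, s (φ p) / f * ‖g (u (φ p))‖ < ρ / 2 := by
    have : Tendsto (fun p => s (φ p) / f * ‖g (u (φ p))‖) atTop (nhds (0 / f * ‖g ustar‖)) :=
      (hsφ.div_const f).mul (continuous_norm.continuousAt.tendsto.comp hgconv)
    rw [show (0:ℝ) / f * ‖g ustar‖ = 0 by ring] at this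
    exact this.eventually_lt_const (half_pos hρpos)
  obtain ⟨p, hp1, hp2, hp3⟩ := (hE1.and (hE2.and hjev)).exists
  -- notation for the chosen index
  set k := φ p with hk_def
  set w := g (u k) with hw_def
  set n := j k with hn_def
  set t : ℝ := h k * f ^ (n - 1) with ht_def
  have htpos : 0 < t := mul_pos (hh k) (pow_pos hf0 _)
  have htf : t * f = s k := by
    rw [ht_def, hsk, mul_assoc, ← pow_succ, Nat.sub_add_cancel hp3]
  have htsf : t = s k / f := by rw [← htf]; field_simp
  have htw : t * ‖w‖ < ρ / 2 := by rw [htsf]; exact hp2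
  -- the whole search segment lies in the ball of radius ρ (hence in U₀)
  have hseg : ∀ θ : ℝ, 0 ≤ θ → θ ≤ t → dist (u k - θ • w) ustar < ρ := by
    intro θ h0 h1
    have hd : dist (u k - θ • w) (u k) = θ * ‖w‖ := by
      rw [dist_eq_norm]
      simp [norm_smul, abs_of_nonneg h0]
    calc dist (u k - θ • w) ustar ≤ dist (u k - θ • w) (u k) + dist (u k) ustar :=
          dist_triangle _ _ _
      _ < ρ / 2 + ρ / 2 := by
          rw [hd]
          have : θ * ‖w‖ ≤ t * ‖w‖ := mul_le_mul_of_nonneg_right h1 (norm_nonneg _)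
          exact add_lt_add_of_le_of_lt (lt_of_le_of_lt this htw).le hp1 |>.trans_le le_rfl
      _ = ρ := by ring
  have hsegU : ∀ θ : ℝ, 0 ≤ θ → θ ≤ t → u k - θ • w ∈ U₀ := fun θ h0 h1 =>
    hball (lt_of_lt_of_le (hseg θ h0 h1) (min_le_right _ _))
  -- mean value theorem along the segment
  set ψ : ℝ → ℝ := fun θ => E (u k - θ • w) with hψ_def
  have hψcont : ContinuousOn ψ (Set.Icc 0 t) := by
    refine (hE.continuousOn).comp ?_ ?_
    · exact (continuous_const.sub (continuous_id.smul continuous_const)).continuousOn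
    · intro θ hθ
      exact hsegU θ hθ.1 hθ.2
  have hψderiv : ∀ θ ∈ Set.Ioo (0:ℝ) t,
      HasDerivAt ψ (-(inner ℝ (g (u k - θ • w)) w : ℝ)) θ := by
    intro θ hθ
    have hc : HasDerivAt (fun θ : ℝ => u k - θ • w) (-w) θ := by
      simpa using ((hasDerivAt_id θ).smul_const w).const_sub (u k)
    have hx : u k - θ • w ∈ U₀ := hsegU θ hθ.1.le hθ.2.le
    have hfd := hasGradientAt_iff_hasFDerivAt.mp (hg _ hx)
    have := hfd.comp_hasDerivAt θ hc
    simp [InnerProductSpace.toDual_apply_apply, inner_neg_right] at this; exact this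
  obtain ⟨ξ, hξ, hslope⟩ :=
    exists_hasDerivAt_eq_slope ψ (fun θ => -(inner ℝ (g (u k - θ • w)) w : ℝ)) htpos hψcont hψderiv
  have hmvt : E (u k) - E (u k - t • w) = t * (inner ℝ (g (u k - ξ • w)) w : ℝ) := by
    have h0 : ψ 0 = E (u k) := by simp [hψ_def]
    have ht' : ψ t = E (u k - t • w) := rfl
    rw [sub_zero] at hslope
    have := hslope
    field_simp at this
    rw [← h0, ← ht']
    linarith [this]
  -- the chosen inner products are large
  have hxin : dist (u k - ξ • w) ustar < ρ := hseg ξ hξ.1.le hξ.2.le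
  have hyin : dist (u k) ustar < ρ := lt_of_lt_of_le hp1 (by linarith)
  obtain ⟨hbig, _⟩ := hkey _ _ hxin hyin
  obtain ⟨_, hsmall⟩ := hkey _ _ hyin hyin
  -- Armijo inequality holds at step `n - 1`, contradicting minimality of `j k`
  refine (hjmin k).2 (n - 1) (Nat.sub_lt (by omega) one_pos) ?_
  have : σ * t * ‖w‖ ^ 2 ≤ t * (inner ℝ (g (u k - ξ • w)) w : ℝ) := by
    have h1 : σ * ‖w‖ ^ 2 ≤ (inner ℝ (g (u k - ξ • w)) w : ℝ) := le_of_lt (lt_trans hsmall hbig)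
    nlinarith
  rw [← ht_def] at *
  rw [ge_iff_le, ← hw_def]
  calc σ * t * ‖w‖ ^ 2 ≤ t * (inner ℝ (g (u k - ξ • w)) w : ℝ) := this
    _ = E (u k) - E (u k - t • w) := hmvt.symm
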